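/- Let A, B, C be three points in ℝ² that are affinely independent, let T be the interior of their convex hull, and let |T| denote the two-dimensional Lebesgue measure of T. Let u : ℝ² → ℝ be an affine function and write u_A = u(A), u_B = u(B), u_C = u(C). If u_A, u_B, u_C are mutually distinct, then for every real p ≥ 1, ∫_T |u(x)|^p dx = (2|T| / ((p+1)(p+2)(u_C − u_A))) · ( (|u_C|^{p+2} − |u_B|^{p+2})/(u_C − u_B) − (|u_A|^{p+2} − |u_B|^{p+2})/(u_A − u_B) ). -/

import Mathlib

open MeasureTheory

lemma lemA {q : ℝ} (hq : 0 < q) (x : ℝ) :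
    HasDerivAt (fun y : ℝ => |y| ^ q * y) ((q + 1) * |x| ^ q) x := by
  rcases eq_or_ne x 0 with rfl | hx
  · rw [hasDerivAt_iff_tendsto_slope]
    have h0 : (q + 1) * |(0:ℝ)| ^ q = 0 := by simp [Real.zero_rpow hq.ne']
    rw [h0]
    have hc : Continuous fun y : ℝ => |y| ^ q :=
      continuous_abs.rpow_const (fun x => Or.inr hq.le)
    have ht := (hc.tendsto 0).mono_left (nhdsWithin_le_nhds (s := {(0:ℝ)}ᶜ))
    simp only [abs_zero, Real.zero_rpow hq.ne'] at ht
    refine ht.congr' ?_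
    filter_upwards [self_mem_nhdsWithin] with y hy
    have hy' : (y : ℝ) ≠ 0 := hy
    simp only [slope, vsub_eq_sub, sub_zero, mul_zero, zero_mul]
    rw [smul_eq_mul, mul_comm (|y| ^ q) y, ← mul_assoc, inv_mul_cancel₀ hy', one_mul]
  · have h1 : HasDerivAt (fun y : ℝ => |y| ^ q) (q * |x| ^ (q - 1) * SignType.sign x) x := by
      have habs : HasDerivAt (fun y : ℝ => |y|) (SignType.sign x : ℝ) x := hasDerivAt_abs hx
      have hr : HasDerivAt (fun t : ℝ => t ^ q) (q * |x| ^ (q - 1)) |x| := by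
        simpa [mul_comm] using Real.hasDerivAt_rpow_const (p := q) (Or.inl (abs_ne_zero.mpr hx))
      exact (hr.comp x habs).congr_deriv (by ring)
    have h2 := h1.mul (hasDerivAt_id x)
    have hsx : (SignType.sign x : ℝ) * x = |x| := by
      rcases lt_or_gt_of_ne hx with h | h
      · simp [h, abs_of_neg h]
      · simp [h, abs_of_pos h]
    have hpow : |x| ^ (q - 1) * |x| = |x| ^ q := by
      rw [← Real.rpow_add_one (abs_ne_zero.mpr hx)]; ring_nf
    refine h2.congr_deriv (Eq.symm ?_)
    rw [id_eq, mul_assoc, hsx, mul_assoc, hpow]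
    ring

lemma lemB {q : ℝ} (hq : 0 < q) (x : ℝ) :
    HasDerivAt (fun y : ℝ => |y| ^ (q + 1)) ((q + 1) * (|x| ^ (q - 1) * x)) x := by
  rcases eq_or_ne x 0 with rfl | hx
  · rw [hasDerivAt_iff_tendsto_slope]
    have h0 : (q + 1) * (|(0:ℝ)| ^ (q-1) * 0) = 0 := by simp
    rw [h0]
    apply squeeze_zero_norm' (a := fun y : ℝ => |y| ^ q)
    · filter_upwards [self_mem_nhdsWithin] with y hy
      have hy' : (y : ℝ) ≠ 0 := hy
      simp only [slope, vsub_eq_sub, sub_zero, abs_zero,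
        Real.zero_rpow (by positivity : q + 1 ≠ 0), smul_eq_mul, mul_zero, zero_mul]
      rw [Real.norm_eq_abs, abs_mul, abs_inv,
        abs_of_nonneg (Real.rpow_nonneg (abs_nonneg y) _),
        Real.rpow_add_one (abs_ne_zero.mpr hy'),
        mul_comm (|y| ^ q) |y|, ← mul_assoc, inv_mul_cancel₀ (abs_ne_zero.mpr hy'), one_mul]
    · have hc : Continuous fun y : ℝ => |y| ^ q :=
        continuous_abs.rpow_const (fun x => Or.inr hq.le)
      have ht := (hc.tendsto 0).mono_left (nhdsWithin_le_nhds (s := {(0:ℝ)}ᶜ))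
      simpa [Real.zero_rpow hq.ne'] using ht
  · have habs : HasDerivAt (fun y : ℝ => |y|) (SignType.sign x : ℝ) x := hasDerivAt_abs hx
    have hr : HasDerivAt (fun t : ℝ => t ^ (q+1)) ((q+1) * |x| ^ q) |x| := by
      simpa [mul_comm] using Real.hasDerivAt_rpow_const (p := q+1) (Or.inl (abs_ne_zero.mpr hx))
    have h := hr.comp x habs
    refine h.congr_deriv (Eq.symm ?_)
    have hsx : |x| ^ q * (SignType.sign x : ℝ) = |x| ^ (q-1) * x := by
      rcases lt_or_gt_of_ne hx with h | h
      · rw [abs_of_neg h,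
          show (-x) ^ q = (-x)^(q-1) * (-x) by
            rw [← Real.rpow_add_one (by linarith : -x ≠ 0)]; ring_nf]
        simp [h]
        
      · rw [abs_of_pos h,
          show x ^ q = x^(q-1) * x by rw [← Real.rpow_add_one h.ne']; ring_nf]
        simp [h]
    rw [mul_assoc, hsx]

lemma contAux (α β p : ℝ) (hp : 1 ≤ p) :
    Continuous (fun t : ℝ => |α + β * t| ^ p) :=
  ((continuous_const.add (continuous_const.mul continuous_id)).abs).rpow_const
    (fun _ => Or.inr (by linarith))

lemma ftc1 (α β p : ℝ) (hβ : β ≠ 0) (hp : 1 ≤ p) (x₀ x₁ : ℝ) :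
    ∫ t in x₀..x₁, |α + β * t| ^ p =
      (|α + β * x₁| ^ p * (α + β * x₁) - |α + β * x₀| ^ p * (α + β * x₀)) / ((p + 1) * β) := by
  have hp0 : 0 < p := by linarith
  have key : ∀ x : ℝ, HasDerivAt
      (fun t : ℝ => (|α + β * t| ^ p * (α + β * t)) / ((p + 1) * β)) (|α + β * x| ^ p) x := by
    intro x
    have haff : HasDerivAt (fun t : ℝ => α + β * t) β x :=
      by simpa using ((hasDerivAt_id x).const_mul β).const_add α
    have h := ((lemA hp0 (α + β * x)).comp x haff).div_const ((p + 1) * β)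
    refine h.congr_deriv (Eq.symm ?_)
    field_simp
  rw [intervalIntegral.integral_eq_sub_of_hasDerivAt (fun x _ => key x)
    ((contAux α β p hp).intervalIntegrable x₀ x₁)]
  ring

lemma ftc2 (α β p : ℝ) (hβ : β ≠ 0) (hp : 1 ≤ p) (x₀ x₁ : ℝ) :
    ∫ s in x₀..x₁, |α + β * s| ^ p * (α + β * s) =
      (|α + β * x₁| ^ (p + 2) - |α + β * x₀| ^ (p + 2)) / ((p + 2) * β) := by
  have hq0 : 0 < p + 1 := by linarith
  have key : ∀ x : ℝ, HasDerivAt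
      (fun t : ℝ => |α + β * t| ^ (p + 2) / ((p + 2) * β))
      (|α + β * x| ^ p * (α + β * x)) x := by
    intro x
    have haff : HasDerivAt (fun t : ℝ => α + β * t) β x :=
      by simpa using ((hasDerivAt_id x).const_mul β).const_add α
    have hB := lemB hq0 (α + β * x)
    rw [show p + 1 + 1 = p + 2 by ring, show p + 1 - 1 = p by ring] at hB
    have h := (hB.comp x haff).div_const ((p + 2) * β)
    refine h.congr_deriv (Eq.symm ?_)
    field_simp
  have hcont : Continuous fun s : ℝ => |α + β * s| ^ p * (α + β * s) :=
    (contAux α β p hp).mul (continuous_const.add (continuous_const.mul continuous_id))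
  rw [intervalIntegral.integral_eq_sub_of_hasDerivAt (fun x _ => key x)
    (hcont.intervalIntegrable x₀ x₁)]
  ring

noncomputable section
abbrev E2 := EuclideanSpace ℝ (Fin 2)
def e₀ : E2 := EuclideanSpace.single 0 1
def e₁ : E2 := EuclideanSpace.single 1 1
def K2 : Set E2 := {x | 0 ≤ x 0 ∧ 0 ≤ x 1 ∧ x 0 + x 1 ≤ 1}
def O2 : Set E2 := {x | 0 < x 0 ∧ 0 < x 1 ∧ x 0 + x 1 < 1}

lemma cont_coord (i : Fin 2) : Continuous fun x : E2 => x i :=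
  (EuclideanSpace.proj i).continuous

lemma O2_open : IsOpen O2 := by
  have h1 : IsOpen {x : E2 | 0 < x 0} := isOpen_lt continuous_const (cont_coord 0)
  have h2 : IsOpen {x : E2 | 0 < x 1} := isOpen_lt continuous_const (cont_coord 1)
  have h3 : IsOpen {x : E2 | x 0 + x 1 < 1} :=
    isOpen_lt ((cont_coord 0).add (cont_coord 1)) continuous_const
  have : O2 = {x : E2 | 0 < x 0} ∩ ({x : E2 | 0 < x 1} ∩ {x : E2 | x 0 + x 1 < 1}) := by
    ext x; simp [O2, and_assoc]
  rw [this]; exact h1.inter (h2.inter h3)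

lemma K2_convex : Convex ℝ K2 := by
  intro x hx y hy a b ha hb hab
  obtain ⟨hx1, hx2, hx3⟩ := hx
  obtain ⟨hy1, hy2, hy3⟩ := hy
  refine ⟨?_, ?_, ?_⟩ <;>
    simp only [PiLp.add_apply, PiLp.smul_apply, smul_eq_mul] <;> nlinarith

lemma hull_sub_K2 : convexHull ℝ {0, e₀, e₁} ⊆ K2 := by
  apply convexHull_min _ K2_convex
  intro x hx
  rcases hx with rfl | rfl | rfl
  · refine ⟨le_refl _, le_refl _, by norm_num⟩
  · refine ⟨?_, ?_, ?_⟩ <;> simp [e₀, EuclideanSpace.single_apply]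
  · refine ⟨?_, ?_, ?_⟩ <;> simp [e₁, EuclideanSpace.single_apply]

lemma O2_sub_hull : O2 ⊆ convexHull ℝ {0, e₀, e₁} := by
  rintro x ⟨h1, h2, h3⟩
  have := Finset.centerMass_mem_convexHull (s := ({0, e₀, e₁} : Set E2)) (t := (Finset.univ : Finset (Fin 3)))
    (w := ![1 - x 0 - x 1, x 0, x 1]) (z := ![0, e₀, e₁])
    (fun i _ => by fin_cases i <;> simp <;> linarith)
    (by simp [Fin.sum_univ_three]; ring_nf; norm_num)
    (fun i _ => by fin_cases i <;> simp [Set.mem_insert_iff])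
  convert this using 1
  rw [Finset.centerMass]
  rw [show ∑ i, ![1 - x 0 - x 1, x 0, x 1] i = 1 by simp [Fin.sum_univ_three]; ring]
  rw [inv_one, one_smul]
  simp only [Fin.sum_univ_three]
  refine PiLp.ext fun i => ?_  -- equality in E2
  fin_cases i <;>
    simp [e₀, e₁, PiLp.add_apply, PiLp.smul_apply, EuclideanSpace.single_apply] <;> ring

lemma interior_K2_sub : interior K2 ⊆ O2 := by
  intro x hx
  obtain ⟨ε, hε, hball⟩ := Metric.mem_nhds_iff.mp (mem_interior_iff_mem_nhds.mp hx)
  have hnorm : ∀ i : Fin 2, ‖(EuclideanSpace.single i (ε / 2) : E2)‖ = ε / 2 := by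
    intro i
    rw [EuclideanSpace.norm_single]
    rw [Real.norm_eq_abs, abs_of_pos (by linarith)]
  have hmem : ∀ i : Fin 2, ∀ σ : ℝ, σ = 1 ∨ σ = -1 →
      x + σ • (EuclideanSpace.single i (ε / 2) : E2) ∈ K2 := by
    intro i σ hσ
    apply hball
    rw [Metric.mem_ball, dist_eq_norm]
    have : x + σ • (EuclideanSpace.single i (ε / 2) : E2) - x
        = σ • (EuclideanSpace.single i (ε / 2) : E2) := by abel
    rw [this, norm_smul]
    rcases hσ with rfl | rfl <;> simp [hnorm i] <;> linarith
  have h0 := hmem 0 (-1) (Or.inr rfl)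
  have h1 := hmem 1 (-1) (Or.inr rfl)
  have h2 := hmem 0 1 (Or.inl rfl)
  simp only [K2, Set.mem_setOf_eq, PiLp.add_apply, PiLp.smul_apply, smul_eq_mul,
    EuclideanSpace.single_apply] at h0 h1 h2
  norm_num at h0 h1 h2
  refine ⟨by linarith [h0.1], by linarith [h1.2.1], by linarith [h2.2.2]⟩

lemma interior_hull_eq : interior (convexHull ℝ ({0, e₀, e₁} : Set E2)) = O2 := by
  apply le_antisymm
  · exact le_trans (interior_mono hull_sub_K2) interior_K2_sub
  · rw [← O2_open.interior_eq]
    exact interior_mono O2_sub_hull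

noncomputable def myR : Set (ℝ × ℝ) := {q | 0 < q.1 ∧ 0 < q.2 ∧ q.1 + q.2 < 1}

lemma myR_open : IsOpen myR := by
  have h1 : IsOpen {q : ℝ × ℝ | 0 < q.1} := isOpen_lt continuous_const continuous_fst
  have h2 : IsOpen {q : ℝ × ℝ | 0 < q.2} := isOpen_lt continuous_const continuous_snd
  have h3 : IsOpen {q : ℝ × ℝ | q.1 + q.2 < 1} :=
    isOpen_lt (continuous_fst.add continuous_snd) continuous_const
  have : myR = {q : ℝ × ℝ | 0 < q.1} ∩ ({q : ℝ × ℝ | 0 < q.2} ∩ {q : ℝ × ℝ | q.1 + q.2 < 1}) := by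
    ext q; simp [myR, and_assoc]
  rw [this]
  exact h1.inter (h2.inter h3)

set_option maxHeartbeats 1000000 in
lemma coreR (a b c p : ℝ) (hab : a ≠ b) (hbc : b ≠ c) (hac : a ≠ c) (hp : 1 ≤ p) :
    ∫ q in myR, |a + (b - a) * q.1 + (c - a) * q.2| ^ p =
      1 / ((p + 1) * (p + 2) * (c - a)) *
        ((|c| ^ (p + 2) - |b| ^ (p + 2)) / (c - b) -
          (|a| ^ (p + 2) - |b| ^ (p + 2)) / (a - b)) := by
  classical
  have hca : c - a ≠ 0 := sub_ne_zero.mpr (Ne.symm hac)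
  have hba : b - a ≠ 0 := sub_ne_zero.mpr (Ne.symm hab)
  have hbc' : b - c ≠ 0 := sub_ne_zero.mpr hbc
  have hp0 : (0:ℝ) < p + 1 := by linarith
  have hp2 : (0:ℝ) < p + 2 := by linarith
  set G : ℝ × ℝ → ℝ := fun q => |a + (b - a) * q.1 + (c - a) * q.2| ^ p with hG
  have hGcont : Continuous G := by
    apply Continuous.rpow_const
    · exact (continuous_const.add ((continuous_const.mul continuous_fst)) |>.add
        (continuous_const.mul continuous_snd)).abs
    · exact fun _ => Or.inr (by linarith)
  have hRm : MeasurableSet myR := myR_open.measurableSet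
  have hRsub : myR ⊆ Set.Icc (0:ℝ) 1 ×ˢ Set.Icc (0:ℝ) 1 := by
    rintro ⟨s, t⟩ ⟨h1, h2, h3⟩
    exact ⟨⟨h1.le, by simp only at *; linarith⟩, ⟨h2.le, by simp only at *; linarith⟩⟩
  have hint : IntegrableOn G myR := by
    exact (hGcont.continuousOn.integrableOn_compact (isCompact_Icc.prod isCompact_Icc)).mono_set hRsub
  have hindint : Integrable (myR.indicator G) := (integrable_indicator_iff hRm).mpr hint
  -- Fubini
  have step1 : ∫ q in myR, G q = ∫ s : ℝ, ∫ t : ℝ, myR.indicator G (s, t) := by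
    rw [← integral_indicator hRm]
    rw [Measure.volume_eq_prod] at hindint ⊢
    exact integral_prod _ hindint
  -- inner integral
  have step2 : ∀ s : ℝ, (∫ t : ℝ, myR.indicator G (s, t)) =
      (Set.Ioo (0:ℝ) 1).indicator (fun s => ∫ t in Set.Ioo 0 (1 - s), G (s, t)) s := by
    intro s
    by_cases hs : s ∈ Set.Ioo (0:ℝ) 1
    · have hiff : ∀ t : ℝ, ((s, t) ∈ myR) ↔ t ∈ Set.Ioo 0 (1 - s) := by
        intro t
        simp only [myR, Set.mem_setOf_eq, Set.mem_Ioo]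
        constructor
        · rintro ⟨_, h2, h3⟩; exact ⟨h2, by linarith⟩
        · rintro ⟨h2, h3⟩; exact ⟨hs.1, h2, by linarith⟩
      have : (fun t : ℝ => myR.indicator G (s, t)) =
          (Set.Ioo (0:ℝ) (1 - s)).indicator (fun t => G (s, t)) := by
        funext t
        rw [Set.indicator_apply, Set.indicator_apply, if_congr (hiff t) rfl rfl]
      rw [this, integral_indicator measurableSet_Ioo, Set.indicator_of_mem hs]
    · have hnot : ∀ t : ℝ, (s, t) ∉ myR := by
        intro t hmem
        obtain ⟨h1, h2, h3⟩ := hmem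
        simp only at h1 h2 h3
        exact hs ⟨h1, by linarith⟩
      have : (fun t : ℝ => myR.indicator G (s, t)) = fun _ => 0 := by
        funext t
        exact Set.indicator_of_notMem (hnot t) G
      rw [this, integral_zero, Set.indicator_of_notMem hs]
  -- compute inner on Ioo 0 1
  have step3 : ∀ s ∈ Set.Ioo (0:ℝ) 1, (∫ t in Set.Ioo 0 (1 - s), G (s, t)) =
      (|c + (b - c) * s| ^ p * (c + (b - c) * s)
        - |a + (b - a) * s| ^ p * (a + (b - a) * s)) / ((p + 1) * (c - a)) := by
    intro s hs
    have h01 : (0:ℝ) ≤ 1 - s := by linarith [hs.2]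
    have : (∫ t in Set.Ioo 0 (1 - s), G (s, t)) = ∫ t in (0:ℝ)..(1 - s), G (s, t) := by
      rw [intervalIntegral.integral_of_le h01, integral_Ioc_eq_integral_Ioo]
    rw [this]
    have := ftc1 (a + (b - a) * s) (c - a) p hca hp 0 (1 - s)
    simp only [hG]
    rw [this]
    rw [show a + (b - a) * s + (c - a) * (1 - s) = c + (b - c) * s by ring,
        show a + (b - a) * s + (c - a) * 0 = a + (b - a) * s by ring]
  -- assemble
  rw [step1]
  simp_rw [step2]
  rw [integral_indicator measurableSet_Ioo]
  rw [setIntegral_congr_fun measurableSet_Ioo step3]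
  have h01 : (0:ℝ) ≤ 1 := by norm_num
  rw [show (∫ s in Set.Ioo (0:ℝ) 1,
      (|c + (b - c) * s| ^ p * (c + (b - c) * s)
        - |a + (b - a) * s| ^ p * (a + (b - a) * s)) / ((p + 1) * (c - a)))
      = ∫ s in (0:ℝ)..1,
      (|c + (b - c) * s| ^ p * (c + (b - c) * s)
        - |a + (b - a) * s| ^ p * (a + (b - a) * s)) / ((p + 1) * (c - a)) by
    rw [intervalIntegral.integral_of_le h01, integral_Ioc_eq_integral_Ioo]]
  have hc1 : Continuous fun s : ℝ => |c + (b - c) * s| ^ p * (c + (b - c) * s) := by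
    apply Continuous.mul
    · exact ((continuous_const.add (continuous_const.mul continuous_id)).abs).rpow_const
        (fun _ => Or.inr (by linarith))
    · exact continuous_const.add (continuous_const.mul continuous_id)
  have hc2 : Continuous fun s : ℝ => |a + (b - a) * s| ^ p * (a + (b - a) * s) := by
    apply Continuous.mul
    · exact ((continuous_const.add (continuous_const.mul continuous_id)).abs).rpow_const
        (fun _ => Or.inr (by linarith))
    · exact continuous_const.add (continuous_const.mul continuous_id)
  rw [intervalIntegral.integral_div]
  rw [intervalIntegral.integral_sub (hc1.intervalIntegrable 0 1) (hc2.intervalIntegrable 0 1)]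
  rw [ftc2 c (b - c) p hbc' hp 0 1, ftc2 a (b - a) p hba hp 0 1]
  rw [show c + (b - c) * 1 = b by ring, show c + (b - c) * 0 = c by ring,
      show a + (b - a) * 1 = b by ring, show a + (b - a) * 0 = a by ring]
  have hcb : c - b ≠ 0 := sub_ne_zero.mpr (Ne.symm hbc)
  have hab2 : a - b ≠ 0 := sub_ne_zero.mpr hab
  field_simp
  ring

def ψ : E2 ≃ᵐ (ℝ × ℝ) :=
  (MeasurableEquiv.toLp 2 (Fin 2 → ℝ)).symm.trans MeasurableEquiv.finTwoArrow


/-- Closed-form formula for `∫_T |u|^p` where `T` is an open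
triangle in `ℝ²` and `u` is an affine function with mutually distinct values
`u A`, `u B`, `u C` at the vertices. -/
theorem stmt_6 (A B C : EuclideanSpace ℝ (Fin 2))
    (hind : AffineIndependent ℝ ![A, B, C])
    (u : EuclideanSpace ℝ (Fin 2) → ℝ)
    (l : EuclideanSpace ℝ (Fin 2) →ₗ[ℝ] ℝ) (c : ℝ) (hu : ∀ x, u x = l x + c)
    (hAB : u A ≠ u B) (hBC : u B ≠ u C) (hAC : u A ≠ u C)
    (p : ℝ) (hp : 1 ≤ p) :
    ∫ x in interior (convexHull ℝ {A, B, C}), |u x| ^ p =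
      2 * (volume (interior (convexHull ℝ ({A, B, C} : Set (EuclideanSpace ℝ (Fin 2)))))).toReal /
          ((p + 1) * (p + 2) * (u C - u A)) *
        ((|u C| ^ (p + 2) - |u B| ^ (p + 2)) / (u C - u B) -
          (|u A| ^ (p + 2) - |u B| ^ (p + 2)) / (u A - u B)) := by
  classical
  -- the linear map
  set L : E2 →L[ℝ] E2 :=
    (EuclideanSpace.proj (0 : Fin 2)).smulRight (B - A) +
      (EuclideanSpace.proj (1 : Fin 2)).smulRight (C - A) with hL
  have hLapp : ∀ x : E2, L x = x 0 • (B - A) + x 1 • (C - A) := fun _ => rfl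
  set Φ : E2 → E2 := fun x => A + L x with hΦ
  -- linear independence of B - A, C - A
  have hli : ∀ r s : ℝ, r • (B - A) + s • (C - A) = 0 → r = 0 ∧ s = 0 := by
    intro r s h
    have key := affineIndependent_iff.mp hind Finset.univ ![-(r + s), r, s]
      (by simp [Fin.sum_univ_three]) ?_
    · exact ⟨by simpa using key 1 (Finset.mem_univ _), by simpa using key 2 (Finset.mem_univ _)⟩
    · have : ∑ e ∈ Finset.univ, ![-(r + s), r, s] e • ![A, B, C] e
          = r • (B - A) + s • (C - A) := by
        simp [Fin.sum_univ_three]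
        module
      rw [this, h]
  have hLinj : Function.Injective L := by
    intro x y hxy
    have h0 : L (x - y) = 0 := by rw [map_sub, hxy, sub_self]
    rw [hLapp] at h0
    obtain ⟨h1, h2⟩ := hli _ _ h0
    have : x - y = 0 := by
      refine PiLp.ext fun i => ?_
      fin_cases i
      · simpa using h1
      · simpa using h2
    have := sub_eq_zero.mp this
    exact this
  have hΦinj : Set.InjOn Φ O2 := fun x _ y _ h => hLinj (by simpa [hΦ] using h)
  -- Φ as an affine map
  set Φaff : E2 →ᵃ[ℝ] E2 :=
    { toFun := Φ
      linear := (L : E2 →ₗ[ℝ] E2)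
      map_vadd' := by
        intro p v
        simp only [hΦ, vadd_eq_add, map_add, ContinuousLinearMap.coe_coe]
        abel } with hΦaff
  -- image of the reference triangle vertices
  have himg3 : Φ '' ({0, e₀, e₁} : Set E2) = {A, B, C} := by
    have h0 : Φ 0 = A := by simp [hΦ]
    have h1 : Φ e₀ = B := by
      simp only [hΦ, hLapp]
      have : (e₀ : E2) 0 = 1 := by simp [e₀, EuclideanSpace.single_apply]
      have h2 : (e₀ : E2) 1 = 0 := by simp [e₀, EuclideanSpace.single_apply]
      rw [this, h2]
      simp
    have h2 : Φ e₁ = C := by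
      simp only [hΦ, hLapp]
      have h1' : (e₁ : E2) 0 = 0 := by simp [e₁, EuclideanSpace.single_apply]
      have h2' : (e₁ : E2) 1 = 1 := by simp [e₁, EuclideanSpace.single_apply]
      rw [h1', h2']
      simp
    rw [Set.image_insert_eq, Set.image_insert_eq, Set.image_singleton, h0, h1, h2]
  -- T = Φ '' O2
  have hT : interior (convexHull ℝ ({A, B, C} : Set E2)) = Φ '' O2 := by
    have hhull : convexHull ℝ ({A, B, C} : Set E2) = Φ '' convexHull ℝ ({0, e₀, e₁} : Set E2) := by
      rw [show Φ '' convexHull ℝ ({0, e₀, e₁} : Set E2)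
          = ⇑Φaff '' convexHull ℝ ({0, e₀, e₁} : Set E2) from rfl,
        AffineMap.image_convexHull]
      congr 1
      rw [show ⇑Φaff '' ({0, e₀, e₁} : Set E2) = Φ '' ({0, e₀, e₁} : Set E2) from rfl, himg3]
    -- homeomorphism
    have hsurj : Function.Surjective (L : E2 →ₗ[ℝ] E2) :=
      LinearMap.injective_iff_surjective.mp hLinj
    set Leq : E2 ≃ₗ[ℝ] E2 := LinearEquiv.ofBijective (L : E2 →ₗ[ℝ] E2) ⟨hLinj, hsurj⟩ with hLeq
    set hom : E2 ≃ₜ E2 :=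
      Leq.toContinuousLinearEquiv.toHomeomorph.trans (Homeomorph.addLeft A) with hhom
    have hhomΦ : ⇑hom = Φ := rfl
    rw [hhull, ← hhomΦ, ← hom.image_interior, interior_hull_eq]
  -- change of variables
  have hO2m : MeasurableSet O2 := O2_open.measurableSet
  have hfder : ∀ x ∈ O2, HasFDerivWithinAt Φ ((fun _ : E2 => L) x) O2 x := fun x _ =>
    (L.hasFDerivAt.const_add A).hasFDerivWithinAt
  have hCOV := integral_image_eq_integral_abs_det_fderiv_smul volume hO2m hfder hΦinj
    (fun x => |u x| ^ p)
  rw [hT, hCOV]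
  -- compute the integrand
  set a := u A with ha
  set b := u B with hb
  set cc := u C with hcc
  have hcomp : ∀ x : E2, |u (Φ x)| ^ p
      = |a + (b - a) * (ψ x).1 + (cc - a) * (ψ x).2| ^ p := by
    intro x
    have hψx : ψ x = (x 0, x 1) := rfl
    have : u (Φ x) = a + (b - a) * x 0 + (cc - a) * x 1 := by
      rw [hΦ]
      simp only [hu, hLapp]
      rw [map_add, map_add, _root_.map_smul, _root_.map_smul, map_sub, map_sub]
      simp only [smul_eq_mul, ha, hb, hcc, hu]
      ring
    rw [this, hψx]
  have hdet : ∀ x : E2, |((fun _ : E2 => L) x).det| = |L.det| := fun _ => rfl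
  simp only [hcomp, hdet, smul_eq_mul]
  rw [MeasureTheory.integral_const_mul]
  -- transport to ℝ × ℝ
  have hψvol : MeasurePreserving ψ volume volume :=
    (MeasureTheory.volume_preserving_finTwoArrow ℝ).comp
      (EuclideanSpace.volume_preserving_symm_measurableEquiv_toLp (Fin 2))
  have hO2R : O2 = ψ ⁻¹' myR := rfl
  have htrans : ∫ x in O2, |a + (b - a) * (ψ x).1 + (cc - a) * (ψ x).2| ^ p
      = ∫ q in myR, |a + (b - a) * q.1 + (cc - a) * q.2| ^ p := by
    rw [hO2R]
    exact hψvol.setIntegral_preimage_emb ψ.measurableEmbedding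
      (fun q => |a + (b - a) * q.1 + (cc - a) * q.2| ^ p) myR
  rw [htrans, coreR a b cc p hAB hBC hAC hp]
  -- volume computation
  have hvolT : volume (interior (convexHull ℝ ({A, B, C} : Set E2)))
      = ENNReal.ofReal |L.det| * volume O2 := by
    rw [hT, ← lintegral_abs_det_fderiv_eq_addHaar_image volume hO2m hfder hΦinj]
    rw [setLIntegral_const]
  have hvolO2 : volume O2 = volume myR := by
    rw [hO2R]
    exact hψvol.measure_preimage myR_open.measurableSet.nullMeasurableSet
  have hvolR : volume myR = ENNReal.ofReal (1 / 2) := by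
    have hreg : myR = regionBetween (fun _ : ℝ => (0:ℝ)) (fun s : ℝ => 1 - s) (Set.Ioo 0 1) := by
      ext ⟨s, t⟩
      simp only [myR, regionBetween, Set.mem_setOf_eq, Set.mem_Ioo]
      constructor
      · rintro ⟨h1, h2, h3⟩; exact ⟨⟨h1, by linarith⟩, h2, by linarith⟩
      · rintro ⟨⟨h1, h2⟩, h3, h4⟩; exact ⟨h1, h3, by linarith⟩
    have hf_int : IntegrableOn (fun _ : ℝ => (0:ℝ)) (Set.Ioo 0 1) := integrableOn_zero
    have hg_int : IntegrableOn (fun s : ℝ => 1 - s) (Set.Ioo 0 1) := by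
      exact (((continuous_const.sub continuous_id).continuousOn.integrableOn_compact
        isCompact_Icc).mono_set Set.Ioo_subset_Icc_self)
    rw [hreg, Measure.volume_eq_prod]
    rw [volume_regionBetween_eq_integral hf_int hg_int measurableSet_Ioo
      (fun x hx => by simp only [Set.mem_Ioo] at hx; simp; linarith [hx.2])]
    congr 1
    have : ∫ y in Set.Ioo (0:ℝ) 1, ((fun s : ℝ => 1 - s) - fun _ : ℝ => (0:ℝ)) y
        = ∫ y in (0:ℝ)..1, (1 - y) := by
      rw [intervalIntegral.integral_of_le (by norm_num), integral_Ioc_eq_integral_Ioo]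
      congr 1
      funext y
      simp
    rw [this, intervalIntegral.integral_sub intervalIntegrable_const
      intervalIntegral.intervalIntegrable_id]
    simp [integral_id]
    norm_num
  have htoReal : (volume (interior (convexHull ℝ ({A, B, C} : Set E2)))).toReal
      = |L.det| * (1 / 2) := by
    rw [hvolT, hvolO2, hvolR, ← ENNReal.ofReal_mul (abs_nonneg _), ENNReal.toReal_ofReal]
    positivity
  rw [hT] at htoReal
  rw [htoReal]
  ring

end
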